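/- arXiv:2102.02276 — 3 statements merged into one kernel-verified Lean document; each statement's English description precedes it below -/
import Mathlib

section
/- If s^{k-1} ∈ ℝ^n is nonzero, ỹ^k ∈ ℝ^n, χ ∈ [0,2], and ζ := max{0, −χ·⟨s^{k-1}, ỹ^k⟩/‖s^{k-1}‖²}, then the CFM direction s^k := ỹ^k + ζ·s^{k-1} satisfies ‖s^k‖² ≤ ‖ỹ^k‖². -/
open RealInnerProductSpace

/-- The Camerini–Fratta–Maffioli deflected direction `s^k = ỹ^k + ζ·s^{k-1}` with
`ζ = max{0, −χ⟨s^{k-1}, ỹ^k⟩/‖s^{k-1}‖²}` and `χ ∈ [0,2]` satisfies `‖s^k‖² ≤ ‖ỹ^k‖²`. -/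
theorem stmt_4 (n : ℕ) (sprev ytil : EuclideanSpace ℝ (Fin n)) (hs : sprev ≠ 0)
    (χ : ℝ) (hχ : χ ∈ Set.Icc (0 : ℝ) 2)
    (ζ : ℝ) (hζ : ζ = max 0 (-χ * ⟪sprev, ytil⟫ / ‖sprev‖ ^ 2)) :
    ‖ytil + ζ • sprev‖ ^ 2 ≤ ‖ytil‖ ^ 2 := by
  have hns : (0:ℝ) < ‖sprev‖ ^ 2 := pow_pos (norm_pos_iff.mpr hs) 2
  have hexp : ‖ytil + ζ • sprev‖ ^ 2
      = ‖ytil‖ ^ 2 + (2 * ζ * ⟪sprev, ytil⟫ + ζ ^ 2 * ‖sprev‖ ^ 2) := by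
    rw [← real_inner_self_eq_norm_sq, ← real_inner_self_eq_norm_sq,
      ← real_inner_self_eq_norm_sq]
    simp only [inner_add_add_self, inner_smul_left, inner_smul_right,
      real_inner_comm ytil sprev, starRingEnd_apply, star_trivial]
    ring
  rw [hexp]
  have key : 2 * ζ * ⟪sprev, ytil⟫ + ζ ^ 2 * ‖sprev‖ ^ 2 ≤ 0 := by
    rcases le_or_gt (-χ * ⟪sprev, ytil⟫ / ‖sprev‖ ^ 2) 0 with h | h
    · rw [hζ, max_eq_left h]; ring_nf; simp
    · rw [hζ, max_eq_right h.le]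
      have hinner : χ * ⟪sprev, ytil⟫ ≤ 0 := by
        by_contra hc
        push_neg at hc
        have : -χ * ⟪sprev, ytil⟫ / ‖sprev‖ ^ 2 ≤ 0 :=
          div_nonpos_iff.mpr (Or.inr ⟨by linarith, hns.le⟩)
        linarith
      have hζ' : (0:ℝ) ≤ -χ * ⟪sprev, ytil⟫ / ‖sprev‖ ^ 2 := h.le
      set z := -χ * ⟪sprev, ytil⟫ / ‖sprev‖ ^ 2 with hz
      have hzs : z * ‖sprev‖ ^ 2 = -χ * ⟪sprev, ytil⟫ := by
        rw [hz, div_mul_cancel₀ _ hns.ne']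
      have : 2 * z * ⟪sprev, ytil⟫ + z ^ 2 * ‖sprev‖ ^ 2
          = z * (2 * ⟪sprev, ytil⟫ - χ * ⟪sprev, ytil⟫) := by
        have : z ^ 2 * ‖sprev‖ ^ 2 = z * (z * ‖sprev‖ ^ 2) := by ring
        rw [this, hzs]; ring
      rw [this]
      have h2 : 2 * ⟪sprev, ytil⟫ - χ * ⟪sprev, ytil⟫ ≤ 0 := by
        rcases hχ with ⟨h0, h2'⟩
        have hcs : χ * ⟪sprev, ytil⟫ < 0 := by nlinarith [mul_pos h hns]
        have hin : ⟪sprev, ytil⟫ < 0 := by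
          by_contra hc; push_neg at hc; nlinarith [mul_nonneg h0 hc]
        nlinarith [mul_nonneg (sub_nonneg.mpr h2') (le_of_lt (neg_pos.mpr hin))]
      exact mul_nonpos_of_nonneg_of_nonpos hζ' h2
  linarith
end

section
/- Suppose nonnegative numbers e_k := H(λ*) − E[H(λ^k)] satisfy E[‖λ^{k+1} − λ*‖²] ≤ E[‖λ^k − λ*‖²] − e_k²/G^U + M for all k, with ‖λ¹ − λ*‖² ≤ λ^U and constants G^U, M, λ^U > 0. Then H(λ*) − E[max_{k∈[K]} H(λ^k)] ≤ sqrt((λ^U + K·M)·G^U / K), which converges to sqrt(M·G^U) as K → ∞. -/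
open MeasureTheory Filter

lemma integrable_finset_sup' {Ω : Type*} [MeasurableSpace Ω] (μ : Measure Ω)
    (X : ℕ → Ω → ℝ) (hXint : ∀ k, Integrable (X k) μ)
    (s : Finset ℕ) (hs : s.Nonempty) :
    Integrable (fun ω => s.sup' hs (fun k => X k ω)) μ := by
  induction hs using Finset.Nonempty.cons_induction with
  | singleton a => exact hXint a
  | cons a s ha hs ih =>
      simp only [Finset.sup'_cons hs]
      exact (hXint a).sup ih

/-- Rule-2 trade-off bound: if `e_k := H(λ*) − E[H(λ^k)] ≥ 0` and
`E[‖λ^{k+1} − λ*‖²] ≤ E[‖λ^k − λ*‖²] − e_k²/G^U + M` with `‖λ¹ − λ*‖² ≤ λ^U`, then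
`H(λ*) − E[max_{k∈[K]} H(λ^k)] ≤ sqrt((λ^U + K·M)·G^U/K)`, a bound converging to
`sqrt(M·G^U)` as `K → ∞`. -/
theorem stmt_10 {Ω : Type*} [MeasurableSpace Ω] (μ : Measure Ω) [IsProbabilityMeasure μ]
    (X : ℕ → Ω → ℝ) (Hstar : ℝ)
    (hXint : ∀ k, Integrable (X k) μ)
    (hXle : ∀ k ω, X k ω ≤ Hstar)
    (r : ℕ → ℝ) (GU M lamU : ℝ) (hGU : 0 < GU) (hM : 0 < M) (hlamU : 0 < lamU)
    (hrnn : ∀ k, 0 ≤ r k) (hr1 : r 1 ≤ lamU)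
    (hrec : ∀ k : ℕ, 1 ≤ k →
      r (k + 1) ≤ r k - (Hstar - ∫ ω, X k ω ∂μ) ^ 2 / GU + M) :
    (∀ K : ℕ, ∀ hK : 1 ≤ K,
      Hstar - ∫ ω, (Finset.Icc 1 K).sup' (Finset.nonempty_Icc.mpr hK) (fun k => X k ω) ∂μ ≤
        Real.sqrt ((lamU + K * M) * GU / K)) ∧
    Tendsto (fun K : ℕ => Real.sqrt ((lamU + K * M) * GU / K)) atTop
      (nhds (Real.sqrt (M * GU))) := by
  set e : ℕ → ℝ := fun k => Hstar - ∫ ω, X k ω ∂μ with he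
  have henn : ∀ k, 0 ≤ e k := by
    intro k
    have : ∫ ω, X k ω ∂μ ≤ ∫ _ω, Hstar ∂μ :=
      integral_mono (hXint k) (integrable_const _) (hXle k)
    simp only [integral_const, measure_univ, ENNReal.toReal_one, one_smul] at this
    simpa [e] using sub_nonneg.mpr this
  -- summed recursion
  have hsum : ∀ K : ℕ, 1 ≤ K →
      ∑ k ∈ Finset.Icc 1 K, (e k) ^ 2 ≤ (lamU + K * M) * GU := by
    intro K hK
    have key : ∀ K : ℕ, r (K + 1) ≤ r 1 - (∑ k ∈ Finset.Icc 1 K, (e k) ^ 2) / GU + K * M ∨ K = 0 := by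
      intro K
      induction K with
      | zero => right; rfl
      | succ n ih =>
        left
        rcases ih with ih | h0
        · have h2 := hrec (n + 1) (by omega)
          rw [Finset.sum_Icc_succ_top (by omega : 1 ≤ n + 1)]
          have := add_le_add_right (add_le_add_right ih (-(e (n+1))^2 / GU)) M
          calc r (n + 1 + 1) ≤ r (n+1) - (e (n+1))^2 / GU + M := h2
            _ ≤ (r 1 - (∑ k ∈ Finset.Icc 1 n, (e k) ^ 2) / GU + n * M) - (e (n+1))^2 / GU + M := by
                linarith
            _ = r 1 - (∑ k ∈ Finset.Icc 1 n, (e k)^2 + (e (n+1))^2) / GU + (n+1 : ℕ) * M := by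
                push_cast; ring_nf
        · subst h0
          have h2 := hrec 1 le_rfl
          simp only [Finset.Icc_self, Finset.sum_singleton]
          calc r 2 ≤ r 1 - (e 1)^2 / GU + M := h2
            _ = r 1 - (e 1)^2 / GU + (1:ℕ) * M := by push_cast; ring
    rcases key K with hkey | h0
    · have h0 := hrnn (K + 1)
      have : (∑ k ∈ Finset.Icc 1 K, (e k) ^ 2) / GU ≤ r 1 + K * M := by linarith
      have h2 : (∑ k ∈ Finset.Icc 1 K, (e k) ^ 2) ≤ (r 1 + K * M) * GU :=
        (div_le_iff₀ hGU).mp this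
      have : (r 1 + K * M) * GU ≤ (lamU + K * M) * GU := by
        apply mul_le_mul_of_nonneg_right _ hGU.le; linarith
      linarith
    · omega
  constructor
  · intro K hK
    set s := Finset.Icc 1 K with hs
    have hsne : s.Nonempty := Finset.nonempty_Icc.mpr hK
    have hcard : s.card = K := by simp [hs]
    -- exists k with e k ^ 2 ≤ sum / K
    have hKpos : (0:ℝ) < K := by exact_mod_cast hK
    obtain ⟨k, hks, hkle⟩ : ∃ k ∈ s, (e k)^2 ≤ (∑ j ∈ s, (e j)^2) / K := by
      apply Finset.exists_le_of_sum_le hsne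
      rw [Finset.sum_const, hcard, nsmul_eq_mul, mul_div_cancel₀ _ hKpos.ne']
    have hek2 : (e k)^2 ≤ (lamU + K * M) * GU / K := by
      have := hsum K hK
      calc (e k)^2 ≤ (∑ j ∈ s, (e j)^2) / K := hkle
        _ ≤ (lamU + K * M) * GU / K := by
            gcongr
    have hek : e k ≤ Real.sqrt ((lamU + K * M) * GU / K) := by
      rw [show e k = Real.sqrt ((e k)^2) from (Real.sqrt_sq (henn k)).symm]
      exact Real.sqrt_le_sqrt hek2
    refine le_trans ?_ hek
    have hint : Integrable (fun ω => s.sup' hsne (fun k => X k ω)) μ :=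
      integrable_finset_sup' μ X hXint s hsne
    have : ∫ ω, X k ω ∂μ ≤ ∫ ω, s.sup' hsne (fun k => X k ω) ∂μ := by
      apply integral_mono (hXint k) hint
      intro ω
      exact Finset.le_sup' (fun j => X j ω) hks
    simp only [e]
    linarith
  · have h1 : Tendsto (fun K : ℕ => lamU * GU / (K:ℝ) + M * GU) atTop (nhds (M * GU)) := by
      have := tendsto_const_div_atTop_nhds_zero_nat (lamU * GU)
      simpa using this.add tendsto_const_nhds
    have h2 := (Real.continuous_sqrt.tendsto (M * GU)).comp h1
    apply h2.congr'
    filter_upwards [eventually_ge_atTop 1] with K hK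
    have hK0 : (K:ℝ) ≠ 0 := by positivity
    simp only [Function.comp]
    congr 1
    field_simp
end

section
/- Under the recursion ‖λ^{k+1} − λ*‖² ≤ ‖λ^k − λ*‖² − c·(H(λ*) − H(λ^k))² with c = G^L/G^U > 0 and ‖λ¹ − λ*‖² ≤ λ^U, one obtains for all K: 0 ≤ H(λ*) − E[max_{k∈[K]} H(λ^k)] ≤ sqrt(λ^U·G^U/(G^L·K)). Hence E[H_best(λ^K)] → H(λ*) with rate O(sqrt(G^U/K)). -/
open MeasureTheory Filter

private lemma integrable_sup'_aux {Ω : Type*} [MeasurableSpace Ω] {μ : Measure Ω}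
    (f : ℕ → Ω → ℝ) (hf : ∀ k, Integrable (f k) μ) (s : Finset ℕ) (hs : s.Nonempty) :
    Integrable (fun ω => s.sup' hs (fun k => f k ω)) μ := by
  induction hs using Finset.Nonempty.cons_induction with
  | singleton a => simpa using hf a
  | cons a s ha hne ih =>
      simp only [Finset.sup'_cons hne]
      exact (hf a).sup ih

/-- Under the pointwise recursion
`‖λ^{k+1} − λ*‖² ≤ ‖λ^k − λ*‖² − (G^L/G^U)(H(λ*) − H(λ^k))²` with `‖λ¹ − λ*‖² ≤ λ^U`,
one has `0 ≤ H(λ*) − E[max_{k∈[K]} H(λ^k)] ≤ sqrt(λ^U·G^U/(G^L·K))` for all `K`, hence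
`E[H_best(λ^K)] → H(λ*)` (with rate `O(sqrt(G^U/K))`). -/
theorem stmt_12 {Ω : Type*} [MeasurableSpace Ω] (μ : Measure Ω) [IsProbabilityMeasure μ]
    (X : ℕ → Ω → ℝ) (Hstar : ℝ)
    (hXint : ∀ k, Integrable (X k) μ)
    (hXle : ∀ k ω, X k ω ≤ Hstar)
    (dist2 : ℕ → Ω → ℝ) (Glow Gup lamU : ℝ)
    (hGlow : 0 < Glow) (hGup : 0 < Gup) (hlamU : 0 < lamU)
    (hdnn : ∀ k ω, 0 ≤ dist2 k ω) (hd1 : ∀ ω, dist2 1 ω ≤ lamU)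
    (hrec : ∀ (k : ℕ), 1 ≤ k → ∀ ω,
      dist2 (k + 1) ω ≤ dist2 k ω - (Glow / Gup) * (Hstar - X k ω) ^ 2) :
    (∀ K : ℕ, ∀ hK : 1 ≤ K,
      0 ≤ Hstar -
          ∫ ω, (Finset.Icc 1 K).sup' (Finset.nonempty_Icc.mpr hK) (fun k => X k ω) ∂μ ∧
      Hstar - ∫ ω, (Finset.Icc 1 K).sup' (Finset.nonempty_Icc.mpr hK) (fun k => X k ω) ∂μ ≤
        Real.sqrt (lamU * Gup / (Glow * K))) ∧
    Tendsto
      (fun K : ℕ =>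
        if hK : 1 ≤ K then
          ∫ ω, (Finset.Icc 1 K).sup' (Finset.nonempty_Icc.mpr hK) (fun k => X k ω) ∂μ
        else 0)
      atTop (nhds Hstar) := by
  set c := Glow / Gup with hc
  have hcpos : 0 < c := div_pos hGlow hGup
  -- telescoping
  have htel : ∀ K, 1 ≤ K → ∀ ω,
      ∑ k ∈ Finset.Icc 1 K, c * (Hstar - X k ω) ^ 2 ≤ dist2 1 ω - dist2 (K + 1) ω := by
    intro K hK ω
    induction K with
    | zero => omega
    | succ n ih =>
        rcases Nat.eq_or_lt_of_le hK with h1 | h1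
        · simp only [← h1]
          have := hrec 1 le_rfl ω
          simp [Finset.Icc_self]
          linarith
        · have hn : 1 ≤ n := by omega
          rw [Finset.sum_Icc_succ_top (by omega : 1 ≤ n + 1)]
          have := hrec (n + 1) (by omega) ω
          have := ih hn
          linarith
  have hsum : ∀ K, 1 ≤ K → ∀ ω,
      ∑ k ∈ Finset.Icc 1 K, c * (Hstar - X k ω) ^ 2 ≤ lamU := by
    intro K hK ω
    have := htel K hK ω
    have := hd1 ω
    have := hdnn (K + 1) ω
    linarith
  -- key pointwise bound
  have key : ∀ K, (hK : 1 ≤ K) → ∀ ω,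
      Hstar - (Finset.Icc 1 K).sup' (Finset.nonempty_Icc.mpr hK) (fun k => X k ω) ≤
        Real.sqrt (lamU * Gup / (Glow * K)) := by
    intro K hK ω
    have hKpos : (0 : ℝ) < K := by exact_mod_cast hK
    have hcard : ∑ _k ∈ Finset.Icc 1 K, lamU / (K : ℝ) = lamU := by
      rw [Finset.sum_const, Nat.card_Icc]
      simp only [Nat.add_sub_cancel, nsmul_eq_mul]
      field_simp
    have hle : ∑ k ∈ Finset.Icc 1 K, c * (Hstar - X k ω) ^ 2 ≤
        ∑ _k ∈ Finset.Icc 1 K, lamU / (K : ℝ) := by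
      rw [hcard]; exact hsum K hK ω
    obtain ⟨k, hkmem, hkle⟩ := Finset.exists_le_of_sum_le (Finset.nonempty_Icc.mpr hK) hle
    have hsq : (Hstar - X k ω) ^ 2 ≤ lamU * Gup / (Glow * K) := by
      have h3 : (Hstar - X k ω) ^ 2 ≤ (lamU / (K : ℝ)) / c := (le_div_iff₀' hcpos).mpr hkle
      have heq : (lamU / (K : ℝ)) / c = lamU * Gup / (Glow * (K : ℝ)) := by
        rw [hc]; field_simp
      rwa [heq] at h3
    have h1 : Hstar - X k ω ≤ Real.sqrt (lamU * Gup / (Glow * K)) := by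
      have := Real.sqrt_le_sqrt hsq
      rwa [Real.sqrt_sq (by linarith [hXle k ω])] at this
    have h2 : X k ω ≤ (Finset.Icc 1 K).sup' (Finset.nonempty_Icc.mpr hK) (fun k => X k ω) :=
      Finset.le_sup' (fun k => X k ω) hkmem
    linarith
  have hint : ∀ K, (hK : 1 ≤ K) →
      Integrable (fun ω => (Finset.Icc 1 K).sup' (Finset.nonempty_Icc.mpr hK)
        (fun k => X k ω)) μ :=
    fun K hK => integrable_sup'_aux X hXint _ _
  -- integral bounds
  have hup : ∀ K, (hK : 1 ≤ K) →
      ∫ ω, (Finset.Icc 1 K).sup' (Finset.nonempty_Icc.mpr hK) (fun k => X k ω) ∂μ ≤ Hstar := by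
    intro K hK
    calc ∫ ω, (Finset.Icc 1 K).sup' (Finset.nonempty_Icc.mpr hK) (fun k => X k ω) ∂μ
        ≤ ∫ _ω, Hstar ∂μ := by
          refine integral_mono (hint K hK) (integrable_const _) fun ω => ?_
          exact Finset.sup'_le _ _ fun k _ => hXle k ω
      _ = Hstar := by simp
  have hlow : ∀ K : ℕ, (hK : 1 ≤ K) →
      Hstar - Real.sqrt (lamU * Gup / (Glow * K)) ≤
        ∫ ω, (Finset.Icc 1 K).sup' (Finset.nonempty_Icc.mpr hK) (fun k => X k ω) ∂μ := by
    intro K hK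
    calc Hstar - Real.sqrt (lamU * Gup / (Glow * K))
        = ∫ _ω, Hstar - Real.sqrt (lamU * Gup / (Glow * K)) ∂μ := by simp
      _ ≤ ∫ ω, (Finset.Icc 1 K).sup' (Finset.nonempty_Icc.mpr hK) (fun k => X k ω) ∂μ := by
          refine integral_mono (integrable_const _) (hint K hK) fun ω => ?_
          have := key K hK ω
          linarith
  refine ⟨fun K hK => ⟨by linarith [hup K hK], by linarith [hlow K hK]⟩, ?_⟩
  -- tendsto
  have hb0 : Tendsto (fun K : ℕ => Real.sqrt (lamU * Gup / (Glow * K))) atTop (nhds 0) := by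
    have h1 : Tendsto (fun K : ℕ => lamU * Gup / (Glow * K)) atTop (nhds 0) := by
      apply Tendsto.div_atTop (tendsto_const_nhds)
      exact (tendsto_natCast_atTop_atTop).const_mul_atTop hGlow
    simpa [Real.sqrt_zero, Function.comp_def] using (Real.continuous_sqrt.tendsto 0).comp h1
  refine tendsto_of_tendsto_of_tendsto_of_le_of_le'
    (g := fun K : ℕ => Hstar - Real.sqrt (lamU * Gup / (Glow * K)))
    (h := fun _ => Hstar) (by simpa using tendsto_const_nhds.sub hb0) tendsto_const_nhds ?_ ?_
  · filter_upwards [eventually_ge_atTop 1] with K hK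
    rw [dif_pos hK]
    exact hlow K hK
  · filter_upwards [eventually_ge_atTop 1] with K hK
    rw [dif_pos hK]
    exact hup K hK
end
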